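/- Let p be a prime and let α, β ≥ 1. Then a^{p^α} − b^{p^β} is NOT primitive for the unshuffle coproduct over ℤ/p²ℤ unless p^α = p^β = 1; in fact over ℤ/p²ℤ, for distinct letters a, b and α, β ≥ 0, a^{p^α} − b^{p^β} is primitive if and only if α = β = 0. -/

import Mathlib

open TensorProduct

/-- The unshuffle coproduct on the monoid algebra of the free monoid (= `K⟨A⟩`):
the unique algebra morphism (for the concatenation product) sending each letter `a`
to `a ⊗ 1 + 1 ⊗ a`. -/
noncomputable def unshuffle (K A : Type*) [CommSemiring K] :
    MonoidAlgebra K (FreeMonoid A) →ₐ[K]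
      MonoidAlgebra K (FreeMonoid A) ⊗[K] MonoidAlgebra K (FreeMonoid A) :=
  MonoidAlgebra.lift K _ (FreeMonoid A)
    (FreeMonoid.lift fun a =>
      (MonoidAlgebra.of K (FreeMonoid A) (FreeMonoid.of a)) ⊗ₜ[K] 1
        + 1 ⊗ₜ[K] (MonoidAlgebra.of K (FreeMonoid A) (FreeMonoid.of a)))

/-- The word `l` viewed as an element of `K⟨A⟩`. -/
noncomputable def wd {K : Type*} {A : Type*} [CommSemiring K] (l : List A) :
    MonoidAlgebra K (FreeMonoid A) :=
  MonoidAlgebra.of K (FreeMonoid A) (FreeMonoid.ofList l)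

/-- `P` is primitive for the unshuffle coproduct: `c(P) = P ⊗ 1 + 1 ⊗ P`. -/
def IsPrimitive {K A : Type*} [CommSemiring K] (P : MonoidAlgebra K (FreeMonoid A)) : Prop :=
  unshuffle K A P = P ⊗ₜ[K] 1 + 1 ⊗ₜ[K] P

-- aux lemmas
section Aux

variable {K A : Type*} [CommSemiring K]

lemma wd_replicate_pow (a : A) (n : ℕ) :
    wd (K := K) (List.replicate n a) = (wd [a]) ^ n := by
  induction n with
  | zero => simp [wd, FreeMonoid.ofList_nil, MonoidAlgebra.one_def]
  | succ n ih =>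
    rw [List.replicate_succ, wd, FreeMonoid.ofList_cons, map_mul, pow_succ']
    rw [wd] at ih ⊢
    rw [ih, FreeMonoid.ofList_singleton, wd, FreeMonoid.ofList_singleton]

lemma unshuffle_letter (a : A) :
    unshuffle K A (wd [a]) = wd [a] ⊗ₜ[K] 1 + 1 ⊗ₜ[K] wd [a] := by
  rw [wd, FreeMonoid.ofList_singleton, unshuffle, MonoidAlgebra.lift_of,
    FreeMonoid.lift_eval_of]

lemma unshuffle_replicate (a : A) (n : ℕ) :
    unshuffle K A (wd (List.replicate n a)) =
      ∑ i ∈ Finset.range (n + 1),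
        (n.choose i : K) • (wd (List.replicate i a) ⊗ₜ[K] wd (List.replicate (n - i) a)) := by
  have hcomm : Commute ((wd (K := K) [a]) ⊗ₜ[K] (1 : MonoidAlgebra K (FreeMonoid A)))
      ((1 : MonoidAlgebra K (FreeMonoid A)) ⊗ₜ[K] wd [a]) := by
    unfold Commute SemiconjBy
    simp [Algebra.TensorProduct.tmul_mul_tmul]
  rw [wd_replicate_pow, map_pow, unshuffle_letter, hcomm.add_pow]
  refine Finset.sum_congr rfl fun i hi => ?_
  rw [Finset.mem_range] at hi
  rw [Algebra.TensorProduct.tmul_pow, Algebra.TensorProduct.tmul_pow,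
    Algebra.TensorProduct.tmul_mul_tmul, one_pow, one_pow, mul_one, one_mul,
    wd_replicate_pow a i, wd_replicate_pow a (n - i)]
  rw [(Nat.cast_commute (n.choose i) _).symm.eq]
  rw [Nat.cast_smul_eq_nsmul, nsmul_eq_mul]

end Aux

section Coeff

variable {K A : Type*} [CommRing K] [DecidableEq A]

noncomputable def phi (K : Type*) {A : Type*} [CommRing K] (w₁ w₂ : FreeMonoid A) :
    MonoidAlgebra K (FreeMonoid A) ⊗[K] MonoidAlgebra K (FreeMonoid A) →ₗ[K] K :=
  TensorProduct.lift ((LinearMap.mul K K).compl₁₂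
    (Finsupp.lapply w₁ ∘ₗ (MonoidAlgebra.coeffLinearEquiv K).toLinearMap : MonoidAlgebra K (FreeMonoid A) →ₗ[K] K)
    (Finsupp.lapply w₂ ∘ₗ (MonoidAlgebra.coeffLinearEquiv K).toLinearMap : MonoidAlgebra K (FreeMonoid A) →ₗ[K] K))

omit [DecidableEq A] in
lemma phi_tmul (w₁ w₂ : FreeMonoid A) (x y : MonoidAlgebra K (FreeMonoid A)) :
    phi K w₁ w₂ (x ⊗ₜ[K] y) = x.coeff w₁ * y.coeff w₂ := rfl

lemma coeff_wd (l l' : List A) :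
    (wd (K := K) l).coeff (FreeMonoid.ofList l') = if l = l' then 1 else 0 := by
  classical
  rw [wd, MonoidAlgebra.of_apply]
  by_cases h : l = l'
  · subst h; simp [MonoidAlgebra.single_apply]
  · rw [if_neg h, MonoidAlgebra.single_apply,
      if_neg (fun hh => h (FreeMonoid.ofList.injective hh))]

lemma coeff_one (l' : List A) :
    (1 : MonoidAlgebra K (FreeMonoid A)).coeff (FreeMonoid.ofList l') = if ([] : List A) = l' then 1 else 0 := by
  have : (1 : MonoidAlgebra K (FreeMonoid A)) = wd [] := by
    simp [wd, FreeMonoid.ofList_nil, MonoidAlgebra.one_def]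
  rw [this, coeff_wd]

end Coeff

lemma choose_eq_zero_of_primitive {K A : Type*} [CommRing K] {a b : A} (hab : a ≠ b)
    {n m i : ℕ} (h1 : 0 < i) (h2 : i < n)
    (hP : IsPrimitive (wd (K := K) (List.replicate n a) - wd (List.replicate m b))) :
    (n.choose i : K) = 0 := by
  classical
  unfold IsPrimitive at hP
  have H := congrArg (phi K (FreeMonoid.ofList (List.replicate i a))
      (FreeMonoid.ofList (List.replicate (n - i) a))) hP
  rw [map_sub, unshuffle_replicate, unshuffle_replicate] at H
  simp only [map_sub, map_add, map_sum, map_smul, sub_tmul, tmul_sub, phi_tmul,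
    coeff_wd, coeff_one, List.replicate_inj, smul_eq_mul, hab, Ne.symm hab,
    h1.ne', (Nat.sub_pos_of_lt h2).ne', eq_comm (a := ([] : List A)),
    List.replicate_eq_nil_iff, or_true, and_true, or_false, and_false, if_false,
    mul_one, mul_zero, one_mul, zero_mul, sub_zero, zero_sub, add_zero, zero_add] at H
  rw [Finset.sum_eq_single i (fun x _ hx => by simp [hx]) (fun hi => absurd (Finset.mem_range.2 (by omega)) hi),
    Finset.sum_eq_zero (fun x _ => by
      rw [if_neg (fun h => h1.ne' (h.1.symm.trans h.2)), zero_mul, mul_zero]),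
    if_pos rfl, if_pos rfl, mul_one, sub_zero] at H
  rwa [mul_one] at H

lemma not_p_sq_dvd_choose {p : ℕ} (hp : p.Prime) {α : ℕ} (hα : α ≠ 0) :
    ¬ (p ^ 2 ∣ (p ^ α).choose (p ^ (α - 1))) := by
  intro h
  have hle : (2 : ℕ∞) ≤ emultiplicity p ((p ^ α).choose (p ^ (α - 1))) :=
    pow_dvd_iff_le_emultiplicity.1 h
  rw [Nat.Prime.emultiplicity_choose_prime_pow hp
      (Nat.pow_le_pow_right hp.pos (by omega)) (pow_pos hp.pos _).ne',
    multiplicity_pow_self_of_prime hp.prime] at hle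
  have : α - (α - 1) = 1 := by omega
  rw [this] at hle
  exact absurd (by exact_mod_cast hle) (by norm_num)

lemma isPrimitive_neg {K A : Type*} [CommRing K] {P : MonoidAlgebra K (FreeMonoid A)}
    (h : IsPrimitive P) : IsPrimitive (-P) := by
  unfold IsPrimitive at h ⊢
  rw [map_neg, h]
  simp [neg_add, neg_tmul, tmul_neg, add_comm]

/-- over `ℤ/p²ℤ`, for distinct letters `a ≠ b` and `α, β ≥ 0`,
`a^(p^α) − b^(p^β)` is primitive iff `α = β = 0`. -/
theorem primitive_diff_p_powers_mod_p_sq {A : Type*} (p : ℕ) (hp : p.Prime)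
    (a b : A) (hab : a ≠ b) (α β : ℕ) :
    IsPrimitive (wd (K := ZMod (p ^ 2)) (List.replicate (p ^ α) a)
        - wd (List.replicate (p ^ β) b)) ↔ α = 0 ∧ β = 0 := by
  constructor
  · intro h
    constructor
    · by_contra hα
      have hc := choose_eq_zero_of_primitive (K := ZMod (p ^ 2)) hab
        (i := p ^ (α - 1)) (pow_pos hp.pos _)
        (Nat.pow_lt_pow_right hp.one_lt (by omega)) h
      rw [ZMod.natCast_eq_zero_iff] at hc
      exact not_p_sq_dvd_choose hp hα hc
    · by_contra hβ
      have h' : IsPrimitive (wd (K := ZMod (p ^ 2)) (List.replicate (p ^ β) b)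
          - wd (List.replicate (p ^ α) a)) := by
        have := isPrimitive_neg h
        rwa [neg_sub] at this
      have hc := choose_eq_zero_of_primitive (K := ZMod (p ^ 2)) hab.symm
        (i := p ^ (β - 1)) (pow_pos hp.pos _)
        (Nat.pow_lt_pow_right hp.one_lt (by omega)) h'
      rw [ZMod.natCast_eq_zero_iff] at hc
      exact not_p_sq_dvd_choose hp hβ hc
  · rintro ⟨rfl, rfl⟩
    unfold IsPrimitive
    simp only [pow_zero, List.replicate_one]
    rw [map_sub, unshuffle_letter, unshuffle_letter]
    simp only [sub_tmul, tmul_sub]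
    abel
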